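/- Define f(x) = Φ(x − z_{2α}) − Φ(x − z_α). Then f(x) ≥ α for all x with 0 ≤ x ≤ z_{2α} + z_α. -/

import Mathlib

open Real MeasureTheory Set

/-- Standard normal probability density function. -/
noncomputable def stdPhi (x : ℝ) : ℝ := (Real.sqrt (2 * Real.pi))⁻¹ * Real.exp (-x ^ 2 / 2)

/-- Standard normal cumulative distribution function. -/
noncomputable def stdPhiCDF (x : ℝ) : ℝ := ∫ t in Set.Iic x, stdPhi t

lemma stdPhi_eq (x : ℝ) : stdPhi x = (Real.sqrt (2 * Real.pi))⁻¹ * Real.exp (-(1/2) * x ^ 2) := by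
  unfold stdPhi; ring_nf

lemma stdPhi_pos (x : ℝ) : 0 < stdPhi x := by
  unfold stdPhi
  positivity

lemma integrable_stdPhi : Integrable stdPhi := by
  have h : Integrable (fun x : ℝ => Real.exp (-(1/2 : ℝ) * x ^ 2)) := integrable_exp_neg_mul_sq (by norm_num)
  have := h.const_mul (Real.sqrt (2 * Real.pi))⁻¹
  refine this.congr (Filter.Eventually.of_forall fun x => ?_)
  rw [stdPhi_eq]

lemma integral_stdPhi : ∫ x, stdPhi x = 1 := by
  have h : ∫ x : ℝ, Real.exp (-(1/2 : ℝ) * x ^ 2) = Real.sqrt (Real.pi / (1/2)) := integral_gaussian _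
  have h2 : ∫ x, stdPhi x = (Real.sqrt (2 * Real.pi))⁻¹ * ∫ x : ℝ, Real.exp (-(1/2 : ℝ) * x ^ 2) := by
    rw [← integral_const_mul]
    exact integral_congr_ae (Filter.Eventually.of_forall fun x => stdPhi_eq x)
  rw [h2, h]
  have : Real.pi / (1/2) = 2 * Real.pi := by ring
  rw [this, inv_mul_cancel₀]
  positivity

lemma stdPhi_even (x : ℝ) : stdPhi (-x) = stdPhi x := by unfold stdPhi; ring_nf

lemma stdPhiCDF_neg (x : ℝ) : stdPhiCDF (-x) = 1 - stdPhiCDF x := by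
  have h1 : (∫ t in Iic (-x), stdPhi t) = ∫ t in Ioi x, stdPhi t := by
    rw [show Ioi x = Ioi (-(-x)) by ring_nf, ← integral_comp_neg_Iic]
    exact setIntegral_congr_fun measurableSet_Iic fun t _ => (stdPhi_even t).symm
  have h2 : (∫ t in Iic x, stdPhi t) + ∫ t in Ioi x, stdPhi t = 1 := by
    rw [show Ioi x = (Iic x)ᶜ by simp [compl_Iic]]
    rw [integral_add_compl measurableSet_Iic integrable_stdPhi, integral_stdPhi]
  unfold stdPhiCDF
  rw [h1]; linarith

lemma stdPhiCDF_sub {a b : ℝ} : stdPhiCDF b - stdPhiCDF a = ∫ t in a..b, stdPhi t :=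
  intervalIntegral.integral_Iic_sub_Iic integrable_stdPhi.integrableOn integrable_stdPhi.integrableOn

lemma stdPhiCDF_lt {a b : ℝ} (h : a < b) : stdPhiCDF a < stdPhiCDF b := by
  have : 0 < ∫ t in a..b, stdPhi t :=
    intervalIntegral.intervalIntegral_pos_of_pos
      (integrable_stdPhi.intervalIntegrable) (fun x => stdPhi_pos x) h
  have := stdPhiCDF_sub (a := a) (b := b)
  linarith

lemma stdPhiCDF_hasDerivAt (x : ℝ) : HasDerivAt stdPhiCDF (stdPhi x) x := by
  have key : HasDerivAt (fun u => ∫ t in (0:ℝ)..u, stdPhi t) (stdPhi x) x :=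
    intervalIntegral.integral_hasDerivAt_right
      (integrable_stdPhi.intervalIntegrable)
      integrable_stdPhi.aestronglyMeasurable.stronglyMeasurableAtFilter
      (by
        have : Continuous stdPhi := by
          unfold stdPhi
          continuity
        exact this.continuousAt)
  have : stdPhiCDF = fun u => stdPhiCDF 0 + ∫ t in (0:ℝ)..u, stdPhi t := by
    funext u
    rw [← stdPhiCDF_sub]; ring
  rw [this]
  exact (key.const_add (stdPhiCDF 0))

lemma stdPhi_anti {u v : ℝ} (h : |u| ≤ |v|) : stdPhi v ≤ stdPhi u := by
  unfold stdPhi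
  have hu : u ^ 2 ≤ v ^ 2 := by
    have := sq_abs u; have := sq_abs v
    nlinarith [abs_nonneg u, abs_nonneg v]
  have : Real.exp (-v ^ 2 / 2) ≤ Real.exp (-u ^ 2 / 2) := by
    apply Real.exp_le_exp.2; linarith
  have hp : (0:ℝ) < (Real.sqrt (2 * Real.pi))⁻¹ := by positivity
  nlinarith

theorem f_lower_bound
    (α : ℝ) (hα0 : 0 < α) (hα1 : α < 1 / 2)
    (za zb : ℝ) (hza : 1 - stdPhiCDF za = α) (hzb : 1 - stdPhiCDF zb = 2 * α)
    (f : ℝ → ℝ) (hf : ∀ x, f x = stdPhiCDF (x - zb) - stdPhiCDF (x - za)) :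
    ∀ x, 0 ≤ x → x ≤ zb + za → f x ≥ α := by
  -- zb < za
  have hlt : zb < za := by
    by_contra h
    push_neg at h
    rcases eq_or_lt_of_le h with h | h
    · rw [← h] at hzb; linarith
    · have := stdPhiCDF_lt h; linarith
  set m := (zb + za) / 2 with hm
  -- g := body of f
  set g : ℝ → ℝ := fun x => stdPhiCDF (x - zb) - stdPhiCDF (x - za) with hg
  have hderiv : ∀ x, HasDerivAt g (stdPhi (x - zb) - stdPhi (x - za)) x := by
    intro x
    have h1 : HasDerivAt (fun x => stdPhiCDF (x - zb)) (stdPhi (x - zb)) x := by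
      have := (stdPhiCDF_hasDerivAt (x - zb)).comp x ((hasDerivAt_id x).sub_const zb)
      simpa [Function.comp_def] using this
    have h2 : HasDerivAt (fun x => stdPhiCDF (x - za)) (stdPhi (x - za)) x := by
      have := (stdPhiCDF_hasDerivAt (x - za)).comp x ((hasDerivAt_id x).sub_const za)
      simpa [Function.comp_def] using this
    exact h1.sub h2
  have hcont : Continuous g := by
    have : Differentiable ℝ g := fun x => (hderiv x).differentiableAt
    exact this.continuous
  -- monotone on Iic m
  have hmono : MonotoneOn g (Iic m) := by
    apply monotoneOn_of_deriv_nonneg (convex_Iic m) hcont.continuousOn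
      (fun x _ => (hderiv x).differentiableAt.differentiableWithinAt)
    intro x hx
    rw [interior_Iic] at hx
    rw [(hderiv x).deriv]
    have h : |x - zb| ≤ |x - za| := by
      have hx' : x < m := hx
      rcases le_or_gt 0 (x - zb) with h0 | h0
      · rw [abs_of_nonneg h0, abs_of_nonpos (by simp [hm] at hx' ⊢; linarith)]
        simp [hm] at hx'; linarith
      · rw [abs_of_neg h0, abs_of_neg (by linarith)]
        linarith
    linarith [stdPhi_anti h]
  have hanti : AntitoneOn g (Ici m) := by
    apply antitoneOn_of_deriv_nonpos (convex_Ici m) hcont.continuousOn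
      (fun x _ => (hderiv x).differentiableAt.differentiableWithinAt)
    intro x hx
    rw [interior_Ici] at hx
    rw [(hderiv x).deriv]
    have h : |x - za| ≤ |x - zb| := by
      have hx' : m < x := hx
      rcases le_or_gt 0 (x - za) with h0 | h0
      · rw [abs_of_nonneg h0, abs_of_nonneg (by linarith)]
        linarith
      · rw [abs_of_neg h0, abs_of_nonneg (by simp [hm] at hx' ⊢; linarith)]
        simp [hm] at hx'; linarith
    linarith [stdPhi_anti h]
  have hg0 : g 0 = α := by
    simp only [hg, zero_sub]
    rw [stdPhiCDF_neg, stdPhiCDF_neg]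
    linarith
  have hgend : g (zb + za) = α := by
    simp only [hg]
    have e1 : zb + za - zb = za := by ring
    have e2 : zb + za - za = zb := by ring
    rw [e1, e2]
    linarith
  intro x hx0 hxend
  rw [hf]
  show α ≤ g x
  rcases le_or_gt x m with h | h
  · calc α = g 0 := hg0.symm
      _ ≤ g x := hmono (by simp [hm]; linarith) (by exact h) hx0
  · calc α = g (zb + za) := hgend.symm
      _ ≤ g x := hanti (le_of_lt h) (by simp [hm]; linarith) hxend
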